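/- For every real number M > 0 and every ε ∈ (0,1), the integral ∫₀^ε (Ω(0,x)/(4M·r(0,x)))² · Ω(0,x)·r(0,x)² dx diverges (equals +∞); that is, the angular component ^SK_{22} = (Ω/(4M))·(1-τ)/r of the second fundamental form of the initial hypersurface Σ₀ fails to be square-integrable against the induced volume density Ω·r², so ^SK ∉ L²(Σ₀). -/

import Mathlib

open MeasureTheory

/-- The Kruskal relation function `f_M(ρ) = (1 - ρ/(2M))·exp(ρ/(2M))`. -/
noncomputable def fM (M ρ : ℝ) : ℝ := (1 - ρ / (2 * M)) * Real.exp (ρ / (2 * M))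

/-- The radius function in the `(τ,x)` coordinates: `r(τ,x) = r_M((1-τ)² - x²)`. -/
noncomputable def rr (rM : ℝ → ℝ) (τ x : ℝ) : ℝ := rM ((1 - τ) ^ 2 - x ^ 2)

/-- The conformal factor `Ω²(τ,x) = (32M³/r(τ,x))·exp(-r(τ,x)/(2M))`. -/
noncomputable def Om2 (M : ℝ) (rM : ℝ → ℝ) (τ x : ℝ) : ℝ :=
  32 * M ^ 3 / rr rM τ x * Real.exp (-(rr rM τ x) / (2 * M))

/-- `Ω(τ,x) = √(Ω²(τ,x))`. -/
noncomputable def Om (M : ℝ) (rM : ℝ → ℝ) (τ x : ℝ) : ℝ := Real.sqrt (Om2 M rM τ x)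


private lemma aux_u_lt_one {u x : ℝ} (hx2 : x ^ 2 < 1)
    (hfr : (1 - u) * Real.exp u = 1 - x ^ 2) (hu0 : 0 < u) : u < 1 := by
  by_contra h
  push_neg at h
  have h2 : (1 - u) * Real.exp u ≤ 0 :=
    mul_nonpos_of_nonpos_of_nonneg (by linarith) (Real.exp_pos u).le
  nlinarith

private lemma aux_u_le_2x {u x : ℝ} (hu0 : 0 < u) (hu1 : u < 1) (hx0 : 0 < x)
    (hfr : (1 - u) * Real.exp u = 1 - x ^ 2) : u ≤ 2 * x := by
  have hb : (0:ℝ) < 1 - u / 2 := by linarith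
  have hab : Real.exp (u / 2) * (1 - u / 2) ≤ 1 := by
    have h1 := Real.add_one_le_exp (-(u / 2))
    have h2 : Real.exp (-(u / 2)) = (Real.exp (u / 2))⁻¹ := Real.exp_neg _
    have h3 : (1 - u / 2) ≤ (Real.exp (u / 2))⁻¹ := by rw [← h2]; linarith
    calc Real.exp (u / 2) * (1 - u / 2) ≤ Real.exp (u / 2) * (Real.exp (u / 2))⁻¹ :=
          mul_le_mul_of_nonneg_left h3 (Real.exp_pos _).le
      _ = 1 := mul_inv_cancel₀ (Real.exp_pos _).ne'
  have hexpu : Real.exp u = Real.exp (u / 2) ^ 2 := by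
    rw [sq, ← Real.exp_add]; ring_nf
  have habsq : (Real.exp (u / 2) * (1 - u / 2)) ^ 2 ≤ 1 := by
    nlinarith [mul_pos (Real.exp_pos (u / 2)) hb]
  have hkey : (1 - x ^ 2) * (1 - u / 2) ^ 2 ≤ 1 - u := by
    have h4 : (1 - x ^ 2) * (1 - u / 2) ^ 2
        = (1 - u) * (Real.exp (u / 2) * (1 - u / 2)) ^ 2 := by
      rw [← hfr, hexpu]; ring
    have h5 : (1 - u) * (Real.exp (u / 2) * (1 - u / 2)) ^ 2 ≤ (1 - u) * 1 :=
      mul_le_mul_of_nonneg_left habsq (by linarith)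
    rw [h4]; linarith
  have hA1 : u ^ 2 / 4 ≤ x ^ 2 * (1 - u / 2) ^ 2 := by nlinarith
  have hA2 : (1 - u / 2) ^ 2 ≤ 1 := by nlinarith
  have hA3 : x ^ 2 * (1 - u / 2) ^ 2 ≤ x ^ 2 * 1 :=
    mul_le_mul_of_nonneg_left hA2 (sq_nonneg x)
  have h6 : u ^ 2 ≤ 4 * x ^ 2 := by linarith
  nlinarith

set_option maxHeartbeats 1000000 in
/-- For every `M > 0` and every `ε ∈ (0,1)`, the integral
`∫₀^ε (Ω(0,x)/(4M·r(0,x)))² · Ω(0,x)·r(0,x)² dx` diverges (equals `+∞`); that is, the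
angular component `^SK_{22} = (Ω/(4M))·(1-τ)/r` of the second fundamental form of the
initial hypersurface `Σ₀` fails to be square-integrable against the induced volume
density `Ω·r²`, so `^SK ∉ L²(Σ₀)`. -/
theorem second_fundamental_form_not_L2 (M : ℝ) (hM : 0 < M) (rM : ℝ → ℝ)
    (hrM : ∀ s : ℝ, s < 1 → 0 < rM s ∧ fM M (rM s) = s)
    (ε : ℝ) (hε0 : 0 < ε) (hε1 : ε < 1) :
    ∫⁻ x in Set.Ioo (0 : ℝ) ε,
      ENNReal.ofReal
        ((Om M rM 0 x / (4 * M * rr rM 0 x)) ^ 2 * (Om M rM 0 x * (rr rM 0 x) ^ 2)) = ⊤ := by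
  have hE1 : (0:ℝ) < Real.exp 1 := Real.exp_pos 1
  set A : ℝ := 8 * M ^ 2 / Real.exp 1 with hAdef
  have hApos : 0 < A := by positivity
  set c : ℝ := A * Real.sqrt A / (16 * M ^ 2) with hcdef
  have hcpos : 0 < c := by positivity
  -- pointwise lower bound
  have key : ∀ x ∈ Set.Ioo (0 : ℝ) ε, c * x⁻¹ ≤
      (Om M rM 0 x / (4 * M * rr rM 0 x)) ^ 2 * (Om M rM 0 x * (rr rM 0 x) ^ 2) := by
    rintro x ⟨hx0, hxε⟩
    have hx1 : x < 1 := hxε.trans hε1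
    have hx2lt : x ^ 2 < 1 := by nlinarith
    have hs : (1 : ℝ) - x ^ 2 < 1 := by nlinarith
    obtain ⟨hr0, hfr⟩ := hrM (1 - x ^ 2) hs
    have hrr : rr rM 0 x = rM (1 - x ^ 2) := by simp [rr]
    set r := rM (1 - x ^ 2) with hrdef
    set u := r / (2 * M) with hudef
    have hu0 : 0 < u := by positivity
    have hfr' : (1 - u) * Real.exp u = 1 - x ^ 2 := hfr
    have hu1 : u < 1 := aux_u_lt_one hx2lt hfr' hu0
    have hux : u ≤ 2 * x := aux_u_le_2x hu0 hu1 hx0 hfr'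
    have hrval : r = 2 * M * u := by
      rw [hudef, mul_div_assoc']; exact (mul_div_cancel_left₀ r (by positivity : (2 * M) ≠ 0)).symm
    have hrx : r ≤ 4 * M * x := by nlinarith
    have hr2M : r < 2 * M := by nlinarith
    -- lower bound on Om2
    have hO2pos : 0 < Om2 M rM 0 x := by
      rw [Om2, hrr]
      positivity
    have h7 : (8 * M ^ 2) * x⁻¹ ≤ 32 * M ^ 3 / r := by
      have h7a : 32 * M ^ 3 / (4 * M * x) ≤ 32 * M ^ 3 / r :=
        div_le_div_of_nonneg_left (by positivity) hr0 hrx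
      have h7b : 32 * M ^ 3 / (4 * M * x) = (8 * M ^ 2) * x⁻¹ := by
        field_simp; ring
      linarith [h7a, h7b ▸ h7a]
    have h8 : Real.exp (-1) ≤ Real.exp (-r / (2 * M)) := by
      apply Real.exp_le_exp.2
      have hq : r / (2 * M) < 1 := by rw [div_lt_one (by positivity)]; linarith
      rw [neg_div]
      linarith
    have hO2lb : A * x⁻¹ ≤ Om2 M rM 0 x := by
      rw [Om2, hrr]
      have hAx : A * x⁻¹ = ((8 * M ^ 2) * x⁻¹) * Real.exp (-1) := by
        rw [hAdef, Real.exp_neg]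
        field_simp
      rw [hAx]
      exact mul_le_mul h7 h8 (Real.exp_pos _).le (by positivity)
    -- simplify the integrand
    have hOm : Om M rM 0 x = Real.sqrt (Om2 M rM 0 x) := rfl
    have hOmsq : Om M rM 0 x ^ 2 = Om2 M rM 0 x := Real.sq_sqrt hO2pos.le
    have hrrne : rr rM 0 x ≠ 0 := by rw [hrr]; exact hr0.ne'
    have hEeq : (Om M rM 0 x / (4 * M * rr rM 0 x)) ^ 2 * (Om M rM 0 x * (rr rM 0 x) ^ 2)
        = Om2 M rM 0 x * Real.sqrt (Om2 M rM 0 x) / (16 * M ^ 2) := by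
      rw [div_pow]
      rw [show Om M rM 0 x ^ 2 / (4 * M * rr rM 0 x) ^ 2 * (Om M rM 0 x * rr rM 0 x ^ 2)
          = Om M rM 0 x ^ 2 * Om M rM 0 x * (rr rM 0 x ^ 2 / (4 * M * rr rM 0 x) ^ 2) by ring]
      rw [hOmsq, hOm]
      have : rr rM 0 x ^ 2 / (4 * M * rr rM 0 x) ^ 2 = 1 / (16 * M ^ 2) := by
        field_simp; ring
      rw [this]; ring
    rw [hEeq]
    -- final comparison
    have hxi : (1:ℝ) ≤ x⁻¹ := by
      have hxx : x * x⁻¹ = 1 := mul_inv_cancel₀ hx0.ne'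
      nlinarith
    have hAle : A ≤ A * x⁻¹ := by nlinarith
    have hsq : Real.sqrt A ≤ Real.sqrt (Om2 M rM 0 x) := Real.sqrt_le_sqrt (by linarith)
    have h9 : A * x⁻¹ * Real.sqrt A ≤ Om2 M rM 0 x * Real.sqrt (Om2 M rM 0 x) :=
      mul_le_mul hO2lb hsq (Real.sqrt_nonneg _) hO2pos.le
    have h10 : c * x⁻¹ = A * x⁻¹ * Real.sqrt A / (16 * M ^ 2) := by
      rw [hcdef]; ring
    rw [h10]
    exact div_le_div_of_nonneg_right h9 (by positivity) |>.trans_eq rfl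
  -- the comparison integral diverges
  have htop : ∫⁻ x in Set.Ioo (0:ℝ) ε, ENNReal.ofReal (c * x⁻¹) = ⊤ := by
    by_contra h
    have hmeas : AEStronglyMeasurable (fun x : ℝ => c * x⁻¹)
        ((volume : Measure ℝ).restrict (Set.Ioo 0 ε)) :=
      (measurable_const.mul measurable_inv).aestronglyMeasurable
    have hnn : 0 ≤ᵐ[(volume : Measure ℝ).restrict (Set.Ioo 0 ε)] fun x : ℝ => c * x⁻¹ := by
      filter_upwards [ae_restrict_mem measurableSet_Ioo] with x hx
      have : (0:ℝ) < x := hx.1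
      positivity
    have hint : IntegrableOn (fun x : ℝ => c * x⁻¹) (Set.Ioo 0 ε) :=
      (lintegral_ofReal_ne_top_iff_integrable hmeas hnn).1 h
    have hint2 : IntegrableOn (fun x : ℝ => x⁻¹) (Set.Ioo (0:ℝ) ε) := by
      have h2 := hint.const_mul c⁻¹
      have h3 : (fun x : ℝ => c⁻¹ * (c * x⁻¹)) = fun x : ℝ => x⁻¹ := by
        funext x
        rw [← mul_assoc, inv_mul_cancel₀ hcpos.ne', one_mul]
      rwa [h3] at h2
    have hint3 : IntegrableOn (fun x : ℝ => x ^ (-1:ℝ)) (Set.Ioo (0:ℝ) ε) := by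
      have h4 : (fun x : ℝ => x ^ (-1:ℝ)) = fun x : ℝ => x⁻¹ := by
        funext x
        rw [show (-1:ℝ) = ((-1:ℤ):ℝ) by norm_num, Real.rpow_intCast, zpow_neg_one]
      rwa [h4]
    rw [intervalIntegral.integrableOn_Ioo_rpow_iff hε0] at hint3
    linarith
  refine top_le_iff.1 ?_
  rw [← htop]
  refine lintegral_mono_ae ?_
  filter_upwards [ae_restrict_mem measurableSet_Ioo] with x hx
  exact ENNReal.ofReal_le_ofReal (key x hx)
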